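/- Let E and F be real normed spaces, H ≥ 1, and let σₓ, σᵤ, L, L_c ≥ 0. For h = 0, …, H−1, let f_h : E × F → E satisfy ‖f_h(x,u) − f_h(x',u')‖ ≤ σₓ·‖x − x'‖ + σᵤ·‖u − u'‖ for all inputs, let c_h : E × F → ℝ satisfy |c_h(x,u) − c_h(x',u')| ≤ L_c·(‖x − x'‖ + ‖u − u'‖) for all inputs, and let π_h, π̃_h : E → F with each π̃_h L-Lipschitz. Define trajectories by x_0 = x̃_0 and x_{h+1} = f_h(x_h, π_h(x_h)), x̃_{h+1} = f_h(x̃_h, π̃_h(x̃_h)). Suppose there are nonnegative reals e_0, …, e_{H−1} such that ‖π_h(x_h) − π̃_h(x_h)‖ ≤ L·‖x_h − x̃_h‖ + e_h for every h. Then Σ_{h=0}^{H−1} c_h(x_h, π_h(x_h)) − Σ_{h=0}^{H−1} c_h(x̃_h, π̃_h(x̃_h)) ≤ B·Σ_{h=0}^{H−1} e_h, where B = L_c·(1 + (1 + 2L)·σᵤ·Σ_{j=0}^{H−1} (σₓ + 2·σᵤ·L)^j). (This is the deterministic, per-trajectory core of Theorem 4.4 bounding the cost of the safety-constrained policy against the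 pure ML policy.) -/

import Mathlib

/-- deterministic, per-trajectory core of Theorem 4.4.
The cost of the safety-constrained policy exceeds the cost of the pure ML policy
by at most `B · Σ e_h`. -/
theorem stmt4 {E F : Type*} [NormedAddCommGroup E] [NormedSpace ℝ E]
    [NormedAddCommGroup F] [NormedSpace ℝ F]
    (H : ℕ) (hH : 1 ≤ H) (σx σu L Lc : ℝ)
    (hσx : 0 ≤ σx) (hσu : 0 ≤ σu) (hL : 0 ≤ L) (hLc : 0 ≤ Lc)
    (f : ℕ → E → F → E) (c : ℕ → E → F → ℝ) (π πt : ℕ → E → F)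
    (hf : ∀ h < H, ∀ (a a' : E) (b b' : F),
      ‖f h a b - f h a' b'‖ ≤ σx * ‖a - a'‖ + σu * ‖b - b'‖)
    (hc : ∀ h < H, ∀ (a a' : E) (b b' : F),
      |c h a b - c h a' b'| ≤ Lc * (‖a - a'‖ + ‖b - b'‖))
    (hπt : ∀ h < H, ∀ a b : E, ‖πt h a - πt h b‖ ≤ L * ‖a - b‖)
    (x xt : ℕ → E)
    (hx0 : x 0 = xt 0)
    (hxrec : ∀ h, x (h + 1) = f h (x h) (π h (x h)))
    (hxtrec : ∀ h, xt (h + 1) = f h (xt h) (πt h (xt h)))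
    (e : ℕ → ℝ) (he : ∀ h < H, 0 ≤ e h)
    (hdev : ∀ h < H, ‖π h (x h) - πt h (x h)‖ ≤ L * ‖x h - xt h‖ + e h) :
    (∑ h ∈ Finset.range H, c h (x h) (π h (x h)))
        - ∑ h ∈ Finset.range H, c h (xt h) (πt h (xt h))
      ≤ Lc * (1 + (1 + 2 * L) * σu * ∑ j ∈ Finset.range H, (σx + 2 * σu * L) ^ j)
          * ∑ h ∈ Finset.range H, e h := by
  set ρ := σx + 2 * σu * L with hρdef
  have hρ : 0 ≤ ρ := by positivity
  set S := ∑ j ∈ Finset.range H, ρ ^ j with hSdef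
  have hS : 0 ≤ S := Finset.sum_nonneg fun j _ => pow_nonneg hρ j
  -- the control deviation bound
  have hctrl : ∀ h < H, ‖π h (x h) - πt h (xt h)‖ ≤ 2 * L * ‖x h - xt h‖ + e h := by
    intro h hh
    calc ‖π h (x h) - πt h (xt h)‖
        ≤ ‖π h (x h) - πt h (x h)‖ + ‖πt h (x h) - πt h (xt h)‖ := by
          have := norm_add_le (π h (x h) - πt h (x h)) (πt h (x h) - πt h (xt h))
          simpa using this
      _ ≤ (L * ‖x h - xt h‖ + e h) + L * ‖x h - xt h‖ :=
          add_le_add (hdev h hh) (hπt h hh _ _)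
      _ = 2 * L * ‖x h - xt h‖ + e h := by ring
  -- state deviation bound
  have hd : ∀ h, h ≤ H → ‖x h - xt h‖ ≤ σu * ∑ j ∈ Finset.range h, ρ ^ (h - 1 - j) * e j := by
    intro h
    induction h with
    | zero => intro _; simp [hx0]
    | succ n ih =>
      intro hn
      have hnH : n < H := hn
      have ihn := ih (le_of_lt hnH)
      have hstep : ‖x (n+1) - xt (n+1)‖ ≤ ρ * ‖x n - xt n‖ + σu * e n := by
        rw [hxrec, hxtrec]
        have h1 := hf n hnH (x n) (xt n) (π n (x n)) (πt n (xt n))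
        have h2 := hctrl n hnH
        nlinarith [norm_nonneg (x n - xt n), norm_nonneg (π n (x n) - πt n (xt n))]
      calc ‖x (n+1) - xt (n+1)‖ ≤ ρ * ‖x n - xt n‖ + σu * e n := hstep
        _ ≤ ρ * (σu * ∑ j ∈ Finset.range n, ρ ^ (n - 1 - j) * e j) + σu * e n :=
            add_le_add_left (mul_le_mul_of_nonneg_left ihn hρ) _
        _ = σu * ∑ j ∈ Finset.range (n+1), ρ ^ (n + 1 - 1 - j) * e j := by
            rw [Finset.sum_range_succ, Finset.mul_sum, Finset.mul_sum]
            rw [mul_add]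
            congr 1
            · rw [Finset.mul_sum]
              apply Finset.sum_congr rfl
              intro j hj
              have hj' : j < n := Finset.mem_range.mp hj
              have : n + 1 - 1 - j = (n - 1 - j) + 1 := by omega
              rw [this, pow_succ]
              ring
            · have : n + 1 - 1 - n = 0 := by omega
              rw [this]; ring
  -- per-step cost bound
  have hcost : ∀ h < H, c h (x h) (π h (x h)) - c h (xt h) (πt h (xt h))
      ≤ Lc * ((1 + 2 * L) * ‖x h - xt h‖ + e h) := by
    intro h hh
    have h1 := hc h hh (x h) (xt h) (π h (x h)) (πt h (xt h))
    have h2 := hctrl h hh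
    have h3 := abs_le.mp h1 |>.2
    nlinarith [norm_nonneg (x h - xt h)]
  -- sum of state deviations
  have hsumd : ∑ h ∈ Finset.range H, ‖x h - xt h‖ ≤ σu * S * ∑ h ∈ Finset.range H, e h := by
    calc ∑ h ∈ Finset.range H, ‖x h - xt h‖
        ≤ ∑ h ∈ Finset.range H, σu * ∑ j ∈ Finset.range h, ρ ^ (h - 1 - j) * e j := by
          apply Finset.sum_le_sum
          intro h hh
          exact hd h (le_of_lt (Finset.mem_range.mp hh))
      _ = σu * ∑ h ∈ Finset.range H, ∑ j ∈ Finset.range h, ρ ^ (h - 1 - j) * e j := by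
          rw [Finset.mul_sum]
      _ = σu * ∑ j ∈ Finset.range H, ∑ h ∈ Finset.Ico (j+1) H, ρ ^ (h - 1 - j) * e j := by
          congr 1
          have := Finset.sum_Ico_Ico_comm' 0 H (fun j h => ρ ^ (h - 1 - j) * e j)
          simp only [Finset.range_eq_Ico]
          rw [← this]
      _ ≤ σu * ∑ j ∈ Finset.range H, S * e j := by
          apply mul_le_mul_of_nonneg_left _ hσu
          apply Finset.sum_le_sum
          intro j hj
          have hjH : j < H := Finset.mem_range.mp hj
          have hej := he j hjH
          have hcoef : ∑ h ∈ Finset.Ico (j+1) H, ρ ^ (h - 1 - j) ≤ S := by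
            rw [Finset.sum_Ico_eq_sum_range]
            calc ∑ k ∈ Finset.range (H - (j+1)), ρ ^ (j + 1 + k - 1 - j)
                = ∑ k ∈ Finset.range (H - (j+1)), ρ ^ k := by
                  apply Finset.sum_congr rfl
                  intro k _
                  congr 1
                  omega
              _ ≤ S := Finset.sum_le_sum_of_subset_of_nonneg
                  (Finset.range_subset_range.mpr (by omega))
                  (fun i _ _ => pow_nonneg hρ i)
          calc ∑ h ∈ Finset.Ico (j+1) H, ρ ^ (h - 1 - j) * e j
              = (∑ h ∈ Finset.Ico (j+1) H, ρ ^ (h - 1 - j)) * e j := by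
                rw [Finset.sum_mul]
            _ ≤ S * e j := mul_le_mul_of_nonneg_right hcoef hej
      _ = σu * S * ∑ h ∈ Finset.range H, e h := by
          rw [← Finset.mul_sum]; ring
  have hsume : 0 ≤ ∑ h ∈ Finset.range H, e h :=
    Finset.sum_nonneg fun h hh => he h (Finset.mem_range.mp hh)
  calc (∑ h ∈ Finset.range H, c h (x h) (π h (x h)))
        - ∑ h ∈ Finset.range H, c h (xt h) (πt h (xt h))
      = ∑ h ∈ Finset.range H, (c h (x h) (π h (x h)) - c h (xt h) (πt h (xt h))) := by
        rw [Finset.sum_sub_distrib]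
    _ ≤ ∑ h ∈ Finset.range H, Lc * ((1 + 2 * L) * ‖x h - xt h‖ + e h) := by
        apply Finset.sum_le_sum
        intro h hh
        exact hcost h (Finset.mem_range.mp hh)
    _ = Lc * (1 + 2 * L) * (∑ h ∈ Finset.range H, ‖x h - xt h‖)
        + Lc * ∑ h ∈ Finset.range H, e h := by
        rw [Finset.mul_sum, Finset.mul_sum, ← Finset.sum_add_distrib]
        apply Finset.sum_congr rfl
        intro h _; ring
    _ ≤ Lc * (1 + 2 * L) * (σu * S * ∑ h ∈ Finset.range H, e h)
        + Lc * ∑ h ∈ Finset.range H, e h := by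
        have hLc2 : 0 ≤ Lc * (1 + 2 * L) := by positivity
        exact add_le_add_left (mul_le_mul_of_nonneg_left hsumd hLc2) _
    _ = Lc * (1 + (1 + 2 * L) * σu * S) * ∑ h ∈ Finset.range H, e h := by ring
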